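/- Let p_{k̂,e} ≥ 0 (k̂, e ∈ {1,…,K}) be a joint probability distribution of predicted class k̂ and observed class e with ∑_{k̂,e} p_{k̂,e} = 1, whose observation marginals p_e = ∑_{k̂=1}^K p_{k̂,e} are all positive, and let s be the Gerrity scoring matrix built from these marginals. For r = 1,…,K−1, let A_r = ∑_{k̂≤r, e≤r} p_{k̂,e}, B_r = ∑_{k̂>r, e≤r} p_{k̂,e}, C_r = ∑_{k̂≤r, e>r} p_{k̂,e}, D_r = ∑_{k̂>r, e>r} p_{k̂,e}, and define the Peirce Skill Score of the 2×2 contingency table obtained by thresholding at r as PSS(r) = (A_r D_r − C_r B_r) / ((A_r + B_r)(C_r + D_r)); its denominator equals P_r (1 − P_r) > 0. Then the Equitable Skill Score is the average of the K−1 Peirce Skill Scores: ESS = ∑_{k̂=1}^K ∑_{e=1}^K p_{k̂,e} s_{k̂,e} = (1/(K−1)) ∑_{r=1}^{K−1} PSS(r). -/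

import Mathlib

/-- `Pcum K p r` is the cumulative probability `P_r = ∑_{e=1}^r p_e` of the
first `r` classes (classes are `0`-indexed by `Fin K`, so this sums `p e` over
`e` with `(e : ℕ) < r`). -/
noncomputable def Pcum (K : ℕ) (p : Fin K → ℝ) (r : ℕ) : ℝ :=
  ∑ e ∈ Finset.univ.filter (fun e : Fin K => (e : ℕ) < r), p e

/-- `aG K p r = (1 - P_r) / P_r`. -/
noncomputable def aG (K : ℕ) (p : Fin K → ℝ) (r : ℕ) : ℝ :=
  (1 - Pcum K p r) / Pcum K p r

/-- The Gerrity scoring matrix: for `1`-indexed classes `k̂ ≤ e`,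
`s_{k̂,e} = s_{e,k̂} = (1/(K-1)) (∑_{r=1}^{k̂-1} a_r⁻¹ - (e - k̂) + ∑_{r=e}^{K-1} a_r)`.
Here `j k : Fin K` are the `0`-indexed classes (`j = k̂ - 1`, `k = e - 1`), and
the formula is symmetrized via `min`/`max`. -/
noncomputable def gerrity (K : ℕ) (p : Fin K → ℝ) (j k : Fin K) : ℝ :=
  (1 / ((K : ℝ) - 1)) *
    ((∑ r ∈ Finset.Icc 1 (min (j : ℕ) (k : ℕ)), (aG K p r)⁻¹)
      - (((max (j : ℕ) (k : ℕ) : ℕ) : ℝ) - ((min (j : ℕ) (k : ℕ) : ℕ) : ℝ))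
      + ∑ r ∈ Finset.Icc (max (j : ℕ) (k : ℕ) + 1) (K - 1), aG K p r)

/-- `A_r`: joint probability that both the predicted and observed classes are
among the first `r` classes. -/
noncomputable def tableA (K : ℕ) (pj : Fin K → Fin K → ℝ) (r : ℕ) : ℝ :=
  ∑ khat ∈ Finset.univ.filter (fun khat : Fin K => (khat : ℕ) < r),
    ∑ e ∈ Finset.univ.filter (fun e : Fin K => (e : ℕ) < r), pj khat e

/-- `B_r`: joint probability that the predicted class is above the threshold
`r` while the observed class is among the first `r` classes. -/
noncomputable def tableB (K : ℕ) (pj : Fin K → Fin K → ℝ) (r : ℕ) : ℝ :=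
  ∑ khat ∈ Finset.univ.filter (fun khat : Fin K => r ≤ (khat : ℕ)),
    ∑ e ∈ Finset.univ.filter (fun e : Fin K => (e : ℕ) < r), pj khat e

/-- `C_r`: joint probability that the predicted class is among the first `r`
classes while the observed class is above the threshold `r`. -/
noncomputable def tableC (K : ℕ) (pj : Fin K → Fin K → ℝ) (r : ℕ) : ℝ :=
  ∑ khat ∈ Finset.univ.filter (fun khat : Fin K => (khat : ℕ) < r),
    ∑ e ∈ Finset.univ.filter (fun e : Fin K => r ≤ (e : ℕ)), pj khat e

/-- `D_r`: joint probability that both the predicted and observed classes are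
above the threshold `r`. -/
noncomputable def tableD (K : ℕ) (pj : Fin K → Fin K → ℝ) (r : ℕ) : ℝ :=
  ∑ khat ∈ Finset.univ.filter (fun khat : Fin K => r ≤ (khat : ℕ)),
    ∑ e ∈ Finset.univ.filter (fun e : Fin K => r ≤ (e : ℕ)), pj khat e

/-- The Peirce Skill Score of the `2 × 2` contingency table obtained by
thresholding the joint distribution at `r`:
`PSS(r) = (A_r D_r - C_r B_r) / ((A_r + B_r)(C_r + D_r))`. -/
noncomputable def peirceScore (K : ℕ) (pj : Fin K → Fin K → ℝ) (r : ℕ) : ℝ :=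
  (tableA K pj r * tableD K pj r - tableC K pj r * tableB K pj r) /
    ((tableA K pj r + tableB K pj r) * (tableC K pj r + tableD K pj r))

/-- auxiliary pointwise score -/
noncomputable def cfun (K : ℕ) (p : Fin K → ℝ) (r : ℕ) (j k : Fin K) : ℝ :=
  if (j : ℕ) < r ∧ (k : ℕ) < r then aG K p r
  else if (j : ℕ) < r ∨ (k : ℕ) < r then (-1 : ℝ) else (aG K p r)⁻¹

lemma alg_id (A B C D : ℝ) (h1 : A + B ≠ 0) (h2 : C + D ≠ 0) (hs : A + B + C + D = 1) :
    ((C + D) / (A + B)) * A + ((A + B) / (C + D)) * D - (B + C)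
      = (A * D - C * B) / ((A + B) * (C + D)) := by
  have key : A*(C+D)^2 + D*(A+B)^2 - (B+C)*((A+B)*(C+D)) = A*D - C*B := by
    linear_combination (A*(A+B+C+D) - (2*A+B+C)*(A+B) + (A+B)^2) * hs
  field_simp
  linear_combination key

lemma sum_c (K : ℕ) (p : Fin K → ℝ) (j k : Fin K) :
    ∑ r ∈ Finset.Icc 1 (K - 1), cfun K p r j k
      = (∑ r ∈ Finset.Icc 1 (min (j : ℕ) (k : ℕ)), (aG K p r)⁻¹)
          - (((max (j : ℕ) (k : ℕ) : ℕ) : ℝ) - ((min (j : ℕ) (k : ℕ) : ℕ) : ℝ))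
          + ∑ r ∈ Finset.Icc (max (j : ℕ) (k : ℕ) + 1) (K - 1), aG K p r := by
  set m := min (j : ℕ) (k : ℕ) with hm
  set M := max (j : ℕ) (k : ℕ) with hM
  have hmM : m ≤ M := min_le_max
  have hMK : M ≤ K - 1 := by
    have := j.isLt; have := k.isLt; omega
  set c : ℕ → ℝ := fun r => cfun K p r j k with hc
  have e1 : Finset.Icc 1 (K-1) = Finset.Ioc 0 (K-1) := by rw [← Finset.Icc_add_one_left_eq_Ioc]; rfl
  have e2 : Finset.Icc 1 m = Finset.Ioc 0 m := by rw [← Finset.Icc_add_one_left_eq_Ioc]; rfl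
  have e3 : Finset.Icc (M+1) (K-1) = Finset.Ioc M (K-1) := by rw [← Finset.Icc_add_one_left_eq_Ioc]
  have h1 : ∑ r ∈ Finset.Ioc 0 m, c r + ∑ r ∈ Finset.Ioc m M, c r
      = ∑ r ∈ Finset.Ioc 0 M, c r := Finset.sum_Ioc_consecutive _ (Nat.zero_le m) hmM
  have h2 : ∑ r ∈ Finset.Ioc 0 M, c r + ∑ r ∈ Finset.Ioc M (K-1), c r
      = ∑ r ∈ Finset.Ioc 0 (K-1), c r := Finset.sum_Ioc_consecutive _ (Nat.zero_le M) hMK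
  have hfst : ∑ r ∈ Finset.Ioc 0 m, c r = ∑ r ∈ Finset.Icc 1 m, (aG K p r)⁻¹ := by
    rw [e2]; apply Finset.sum_congr rfl
    intro r hr
    simp only [Finset.mem_Ioc] at hr
    have hj : ¬ ((j : ℕ) < r) := by omega
    have hk : ¬ ((k : ℕ) < r) := by omega
    simp [hc, cfun, hj, hk]
  have hmid : ∑ r ∈ Finset.Ioc m M, c r = -(((M : ℝ)) - ((m : ℝ))) := by
    have : ∀ r ∈ Finset.Ioc m M, c r = -1 := by
      intro r hr
      simp only [Finset.mem_Ioc] at hr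
      have hb : ¬ ((j : ℕ) < r ∧ (k : ℕ) < r) := by omega
      have ho : (j : ℕ) < r ∨ (k : ℕ) < r := by omega
      simp [hc, cfun, hb, ho]
    rw [Finset.sum_congr rfl this, Finset.sum_const, Nat.card_Ioc]
    rw [nsmul_eq_mul, Nat.cast_sub hmM]
    ring
  have hlst : ∑ r ∈ Finset.Ioc M (K-1), c r = ∑ r ∈ Finset.Icc (M+1) (K-1), aG K p r := by
    rw [e3]; apply Finset.sum_congr rfl
    intro r hr
    simp only [Finset.mem_Ioc] at hr
    have hb : (j : ℕ) < r ∧ (k : ℕ) < r := by omega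
    simp [hc, cfun, hb]
  calc ∑ r ∈ Finset.Icc 1 (K-1), c r
      = ∑ r ∈ Finset.Ioc 0 (K-1), c r := by rw [e1]
    _ = (∑ r ∈ Finset.Ioc 0 m, c r + ∑ r ∈ Finset.Ioc m M, c r) + ∑ r ∈ Finset.Ioc M (K-1), c r := by
        rw [h1, h2]
    _ = _ := by rw [hfst, hmid, hlst]; ring

lemma gerrity_eq (K : ℕ) (p : Fin K → ℝ) (j k : Fin K) :
    gerrity K p j k = (1 / ((K : ℝ) - 1)) * ∑ r ∈ Finset.Icc 1 (K - 1), cfun K p r j k := by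
  rw [gerrity, sum_c]

lemma split_univ (K r : ℕ) (f : Fin K → ℝ) :
    ∑ x : Fin K, f x
      = ∑ x ∈ Finset.univ.filter (fun x : Fin K => (x : ℕ) < r), f x
        + ∑ x ∈ Finset.univ.filter (fun x : Fin K => r ≤ (x : ℕ)), f x := by
  classical
  rw [← Finset.sum_filter_add_sum_filter_not Finset.univ (fun x : Fin K => (x : ℕ) < r)]
  congr 1
  apply Finset.sum_congr _ (fun _ _ => rfl)
  apply Finset.filter_congr
  intro x _
  simp [not_lt]

lemma AB_eq (K : ℕ) (pj : Fin K → Fin K → ℝ) (r : ℕ) :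
    tableA K pj r + tableB K pj r
      = Pcum K (fun e => ∑ khat : Fin K, pj khat e) r := by
  rw [tableA, tableB, ← split_univ, Pcum]
  exact Finset.sum_comm

lemma CD_eq (K : ℕ) (pj : Fin K → Fin K → ℝ) (r : ℕ) :
    tableC K pj r + tableD K pj r
      = ∑ e ∈ Finset.univ.filter (fun e : Fin K => r ≤ (e : ℕ)), ∑ khat : Fin K, pj khat e := by
  rw [tableC, tableD, ← split_univ]
  exact Finset.sum_comm

lemma quad (K : ℕ) (pj : Fin K → Fin K → ℝ) (p : Fin K → ℝ) (r : ℕ) :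
    ∑ j : Fin K, ∑ k : Fin K, pj j k * cfun K p r j k
      = aG K p r * tableA K pj r - tableC K pj r - tableB K pj r
          + (aG K p r)⁻¹ * tableD K pj r := by
  classical
  set L := Finset.univ.filter (fun x : Fin K => (x : ℕ) < r) with hL
  set G := Finset.univ.filter (fun x : Fin K => r ≤ (x : ℕ)) with hG
  have memL : ∀ x : Fin K, x ∈ L → (x : ℕ) < r := by
    intro x hx; rw [hL, Finset.mem_filter] at hx; exact hx.2
  have memG : ∀ x : Fin K, x ∈ G → r ≤ (x : ℕ) := by
    intro x hx; rw [hG, Finset.mem_filter] at hx; exact hx.2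
  have qAA : ∑ j ∈ L, ∑ k ∈ L, pj j k * cfun K p r j k = aG K p r * tableA K pj r := by
    rw [tableA, Finset.mul_sum]
    apply Finset.sum_congr rfl
    intro j hj
    rw [Finset.mul_sum]
    apply Finset.sum_congr rfl
    intro k hk
    rw [cfun, if_pos ⟨memL j hj, memL k hk⟩]; ring
  have qC : ∑ j ∈ L, ∑ k ∈ G, pj j k * cfun K p r j k = -tableC K pj r := by
    rw [tableC, ← Finset.sum_neg_distrib]
    apply Finset.sum_congr rfl
    intro j hj
    rw [← Finset.sum_neg_distrib]
    apply Finset.sum_congr rfl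
    intro k hk
    rw [cfun, if_neg (fun h => absurd h.2 (not_lt.mpr (memG k hk))),
      if_pos (Or.inl (memL j hj))]; ring
  have qB : ∑ j ∈ G, ∑ k ∈ L, pj j k * cfun K p r j k = -tableB K pj r := by
    rw [tableB, ← Finset.sum_neg_distrib]
    apply Finset.sum_congr rfl
    intro j hj
    rw [← Finset.sum_neg_distrib]
    apply Finset.sum_congr rfl
    intro k hk
    rw [cfun, if_neg (fun h => absurd h.1 (not_lt.mpr (memG j hj))),
      if_pos (Or.inr (memL k hk))]; ring
  have qDD : ∑ j ∈ G, ∑ k ∈ G, pj j k * cfun K p r j k = (aG K p r)⁻¹ * tableD K pj r := by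
    rw [tableD, Finset.mul_sum]
    apply Finset.sum_congr rfl
    intro j hj
    rw [Finset.mul_sum]
    apply Finset.sum_congr rfl
    intro k hk
    have h1 : ¬ ((j : ℕ) < r ∧ (k : ℕ) < r) := fun h => absurd h.1 (not_lt.mpr (memG j hj))
    have h2 : ¬ ((j : ℕ) < r ∨ (k : ℕ) < r) := by
      rintro (h | h)
      · exact absurd h (not_lt.mpr (memG j hj))
      · exact absurd h (not_lt.mpr (memG k hk))
    rw [cfun, if_neg h1, if_neg h2]; ring
  calc ∑ j : Fin K, ∑ k : Fin K, pj j k * cfun K p r j k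
      = ∑ j ∈ L, ∑ k : Fin K, pj j k * cfun K p r j k
          + ∑ j ∈ G, ∑ k : Fin K, pj j k * cfun K p r j k := split_univ K r _
    _ = (∑ j ∈ L, (∑ k ∈ L, pj j k * cfun K p r j k + ∑ k ∈ G, pj j k * cfun K p r j k))
          + ∑ j ∈ G, (∑ k ∈ L, pj j k * cfun K p r j k + ∑ k ∈ G, pj j k * cfun K p r j k) := by
        congr 1 <;> exact Finset.sum_congr rfl (fun j _ => split_univ K r _)
    _ = _ := by
        rw [Finset.sum_add_distrib, Finset.sum_add_distrib, qAA, qC, qB, qDD]; ring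

/-- The Equitable Skill Score equals the average of the `K - 1` Peirce Skill
Scores obtained by thresholding the contingency table; moreover the denominator
of `PSS(r)` equals `P_r (1 - P_r) > 0`, where `P_r` is the cumulative
observation marginal. -/
theorem ess_eq_average_of_peirce
    (K : ℕ) (hK : 2 ≤ K) (pj : Fin K → Fin K → ℝ)
    (hpj : ∀ khat e, 0 ≤ pj khat e)
    (hpjsum : ∑ khat : Fin K, ∑ e : Fin K, pj khat e = 1)
    (hmarg : ∀ e : Fin K, 0 < ∑ khat : Fin K, pj khat e) :
    (∀ r ∈ Finset.Icc 1 (K - 1),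
      (tableA K pj r + tableB K pj r) * (tableC K pj r + tableD K pj r)
          = Pcum K (fun e => ∑ khat : Fin K, pj khat e) r *
              (1 - Pcum K (fun e => ∑ khat : Fin K, pj khat e) r) ∧
        0 < (tableA K pj r + tableB K pj r) * (tableC K pj r + tableD K pj r)) ∧
    ∑ khat : Fin K, ∑ e : Fin K,
        pj khat e * gerrity K (fun e => ∑ khat : Fin K, pj khat e) khat e
      = (1 / ((K : ℝ) - 1)) * ∑ r ∈ Finset.Icc 1 (K - 1), peirceScore K pj r := by
  classical
  set p : Fin K → ℝ := fun e => ∑ khat : Fin K, pj khat e with hp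
  have hptot : ∑ e : Fin K, p e = 1 := by
    rw [hp, Finset.sum_comm]; exact hpjsum
  have hCD1 : ∀ r : ℕ, tableC K pj r + tableD K pj r = 1 - Pcum K p r := by
    intro r
    have h : Pcum K p r + ∑ e ∈ Finset.univ.filter (fun e : Fin K => r ≤ (e : ℕ)), p e = 1 := by
      rw [Pcum, ← split_univ, hptot]
    have h2 : tableC K pj r + tableD K pj r
        = ∑ e ∈ Finset.univ.filter (fun e : Fin K => r ≤ (e : ℕ)), p e := CD_eq K pj r
    linarith
  have hPpos : ∀ r : ℕ, 1 ≤ r → 0 < Pcum K p r := by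
    intro r hr
    rw [Pcum]
    apply Finset.sum_pos (fun e _ => hmarg e)
    exact ⟨⟨0, by omega⟩, by simp; omega⟩
  have hCDpos : ∀ r : ℕ, r ≤ K - 1 → 0 < tableC K pj r + tableD K pj r := by
    intro r hr
    rw [CD_eq]
    apply Finset.sum_pos (fun e _ => hmarg e)
    exact ⟨⟨K - 1, by omega⟩, by simp; omega⟩
  have hmain : ∀ r ∈ Finset.Icc 1 (K - 1),
      aG K p r * tableA K pj r - tableC K pj r - tableB K pj r
          + (aG K p r)⁻¹ * tableD K pj r = peirceScore K pj r := by
    intro r hr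
    rw [Finset.mem_Icc] at hr
    have h1 : (0:ℝ) < tableA K pj r + tableB K pj r := by
      rw [AB_eq]; exact hPpos r hr.1
    have h2 : (0:ℝ) < tableC K pj r + tableD K pj r := hCDpos r hr.2
    have hs : tableA K pj r + tableB K pj r + tableC K pj r + tableD K pj r = 1 := by
      have := hCD1 r
      have := AB_eq K pj r
      rw [← hp] at this
      linarith
    have haG : aG K p r = (tableC K pj r + tableD K pj r) / (tableA K pj r + tableB K pj r) := by
      rw [aG, ← hCD1 r]
      congr 1
      rw [AB_eq, hp]
    have := alg_id (tableA K pj r) (tableB K pj r) (tableC K pj r) (tableD K pj r)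
      (ne_of_gt h1) (ne_of_gt h2) hs
    rw [peirceScore, haG, inv_div]
    linarith [this]
  constructor
  · intro r hr
    rw [Finset.mem_Icc] at hr
    have h1 : (0:ℝ) < tableA K pj r + tableB K pj r := by
      rw [AB_eq]; exact hPpos r hr.1
    have h2 : (0:ℝ) < tableC K pj r + tableD K pj r := hCDpos r hr.2
    refine ⟨?_, mul_pos h1 h2⟩
    rw [AB_eq, ← hp, hCD1 r]
  · calc ∑ j : Fin K, ∑ k : Fin K, pj j k * gerrity K p j k
        = ∑ j : Fin K, ∑ k : Fin K,
            (1 / ((K : ℝ) - 1)) * ∑ r ∈ Finset.Icc 1 (K - 1), pj j k * cfun K p r j k := by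
          apply Finset.sum_congr rfl; intro j _
          apply Finset.sum_congr rfl; intro k _
          rw [gerrity_eq, ← Finset.mul_sum]
          ring
      _ = (1 / ((K : ℝ) - 1)) * ∑ j : Fin K, ∑ k : Fin K,
            ∑ r ∈ Finset.Icc 1 (K - 1), pj j k * cfun K p r j k := by
          simp only [← Finset.mul_sum]
      _ = (1 / ((K : ℝ) - 1)) * ∑ r ∈ Finset.Icc 1 (K - 1),
            ∑ j : Fin K, ∑ k : Fin K, pj j k * cfun K p r j k := by
          congr 1
          rw [Finset.sum_congr rfl (fun j _ => Finset.sum_comm)]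
          exact Finset.sum_comm
      _ = (1 / ((K : ℝ) - 1)) * ∑ r ∈ Finset.Icc 1 (K - 1), peirceScore K pj r := by
          congr 1
          apply Finset.sum_congr rfl
          intro r hr
          rw [quad K pj p r]
          exact hmain r hr
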